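/- Let H be a complex Hilbert space with dim H ≥ 2 and let T be a nonzero bounded linear operator on H. Then there exists ε ∈ [0,1) such that T is ε-orthogonality-preserving if and only if T is bounded from below, i.e., m(T) > 0. -/

import Mathlib

open scoped ComplexInnerProductSpace

noncomputable section

variable {H : Type*} [NormedAddCommGroup H] [InnerProductSpace ℂ H] [CompleteSpace H]

/-- `T` is `ε`-approximately orthogonality preserving: orthogonal vectors are mapped to
`ε`-orthogonal vectors. -/
def IsAOP (T : H →L[ℂ] H) (ε : ℝ) : Prop :=
  ∀ x y : H, ⟪x, y⟫ = 0 → ‖⟪T x, T y⟫‖ ≤ ε * (‖T x‖ * ‖T y‖)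

/-- `ε̂(T)`, the smallest `ε ∈ [0,1]` for which `T` is `ε`-AOP. -/
def epsHat (T : H →L[ℂ] H) : ℝ :=
  sInf {ε : ℝ | 0 ≤ ε ∧ ε ≤ 1 ∧ IsAOP T ε}

/-- The minimum modulus `m(T) = inf {‖T x‖ : ‖x‖ = 1}`. -/
def minMod (T : H →L[ℂ] H) : ℝ :=
  sInf {r : ℝ | ∃ x : H, ‖x‖ = 1 ∧ ‖T x‖ = r}

/-- The set `ℂ𝒱` of scalar multiples of linear isometries of `H`. -/
def scalarIsoms (H : Type*) [NormedAddCommGroup H] [InnerProductSpace ℂ H] :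
    Set (H →L[ℂ] H) :=
  {S | ∃ (c : ℂ) (V : H →L[ℂ] H), (∀ x : H, ‖V x‖ = ‖x‖) ∧ S = c • V}

/-- `dist(T, ℂ𝒱)`. -/
def distCV (T : H →L[ℂ] H) : ℝ := Metric.infDist T (scalarIsoms H)

/-- The set `𝒱` of linear isometries of `H`. -/
def isoms (H : Type*) [NormedAddCommGroup H] [InnerProductSpace ℂ H] :
    Set (H →L[ℂ] H) :=
  {V | ∀ x : H, ‖V x‖ = ‖x‖}

/-- `dist(T, 𝒱)`. -/
def distV (T : H →L[ℂ] H) : ℝ := Metric.infDist T (isoms H)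

private lemma key1' (u v A B : ℝ) (hu : 0 ≤ u) (hA1 : u ≤ A) (hA2 : A ≤ v)
    (hB1 : u ≤ B) (hB2 : B ≤ v) (hS : A + B ≤ u + v) :
    (u+v)^2 * ((A-u)*(B-u)) ≤ (v-u)^2 * (A*B) := by
  nlinarith [mul_nonneg (mul_nonneg hu (le_trans hu (hA1.trans hA2))) (sq_nonneg (A-B)),
    mul_nonneg hu (mul_nonneg (by linarith : (0:ℝ) ≤ u+v-(A+B)) (by nlinarith : (0:ℝ) ≤ v*(A+B)-(u+v)*u))]

private lemma key2' (u v A B : ℝ) (hu : 0 ≤ u) (hA1 : u ≤ A) (hA2 : A ≤ v)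
    (hB1 : u ≤ B) (hB2 : B ≤ v) (hS : u + v ≤ A + B) :
    (u+v)^2 * ((v-A)*(v-B)) ≤ (v-u)^2 * (A*B) := by
  have hv : (0:ℝ) ≤ v := le_trans hu (hA1.trans hA2)
  nlinarith [mul_nonneg (mul_nonneg hv hu) (sq_nonneg (A-B)),
    mul_nonneg hv (mul_nonneg (by linarith : (0:ℝ) ≤ A+B-(u+v)) (by nlinarith : (0:ℝ) ≤ (u+v)*v-u*(A+B)))]

private lemma quad_cs' {P Q r : ℝ}
    (h : ∀ s : ℝ, 0 ≤ Q * (s*s) + (-(2*r)) * s + P) : r^2 ≤ P * Q := by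
  have h2 := discrim_le_zero h
  unfold discrim at h2
  nlinarith

private lemma exists_z' (T : H →L[ℂ] H) (x y : H) (hxy : ⟪x, y⟫ = 0) (s : ℝ) :
    ∃ z : H, ‖T z‖^2 = ‖T x‖^2 - 2*s*‖⟪T x, T y⟫‖ + s^2*‖T y‖^2 ∧
      ‖z‖^2 = ‖x‖^2 + s^2*‖y‖^2 := by
  set r : ℂ := ⟪T x, T y⟫ with hr
  have hw : ∃ w : ℂ, ‖w‖ = 1 ∧ w * r = (‖r‖ : ℂ) := by
    by_cases h0 : r = 0
    · exact ⟨1, by simp [h0]⟩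
    · refine ⟨(starRingEnd ℂ) r / ‖r‖, ?_, ?_⟩
      · rw [norm_div]
        simp only [RCLike.norm_conj, Complex.norm_real, Real.norm_eq_abs, abs_norm]
        exact div_self (norm_ne_zero_iff.mpr h0)
      · rw [div_mul_eq_mul_div, mul_comm ((starRingEnd ℂ) r) r, Complex.mul_conj,
          div_eq_iff (by exact_mod_cast norm_ne_zero_iff.mpr h0), ← Complex.ofReal_mul,
          Complex.normSq_eq_norm_sq, sq]
  obtain ⟨w, hw1, hw2⟩ := hw
  refine ⟨x - ((s:ℂ)*w) • y, ?_, ?_⟩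
  · rw [map_sub, map_smul, @norm_sub_sq ℂ, inner_smul_right]
    have h1 : ((s:ℂ)*w) * r = ((s * ‖r‖ : ℝ) : ℂ) := by
      rw [mul_assoc, hw2]; push_cast; ring
    rw [← hr, h1]
    simp [norm_smul, hw1]
    rw [mul_pow, sq_abs]
    ring
  · rw [@norm_sub_sq ℂ, inner_smul_right, hxy]
    simp [norm_smul, hw1]
    rw [mul_pow, sq_abs]

private lemma cs_lower' (T : H →L[ℂ] H) (c : ℝ) (h : ∀ z : H, c * ‖z‖^2 ≤ ‖T z‖^2)
    (x y : H) (hxy : ⟪x, y⟫ = 0) :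
    ‖⟪T x, T y⟫‖^2 ≤ (‖T x‖^2 - c*‖x‖^2) * (‖T y‖^2 - c*‖y‖^2) := by
  apply quad_cs'
  intro s
  obtain ⟨z, hz1, hz2⟩ := exists_z' T x y hxy s
  have h3 := h z
  rw [hz1, hz2] at h3
  have hs : s * s = s^2 := (sq s).symm
  nlinarith

private lemma cs_upper' (T : H →L[ℂ] H) (c : ℝ) (h : ∀ z : H, ‖T z‖^2 ≤ c * ‖z‖^2)
    (x y : H) (hxy : ⟪x, y⟫ = 0) :
    ‖⟪T x, T y⟫‖^2 ≤ (c*‖x‖^2 - ‖T x‖^2) * (c*‖y‖^2 - ‖T y‖^2) := by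
  apply quad_cs'
  intro s
  obtain ⟨z, hz1, hz2⟩ := exists_z' T x y hxy (-s)
  have h3 := h z
  rw [hz1, hz2] at h3
  have hs : s * s = s^2 := (sq s).symm
  nlinarith

private lemma minMod_le' (T : H →L[ℂ] H) {x : H} (hx : ‖x‖ = 1) : minMod T ≤ ‖T x‖ :=
  csInf_le ⟨0, by rintro r ⟨z, hz, rfl⟩; positivity⟩ ⟨x, hx, rfl⟩

private lemma unit_norm' {x : H} (hx : x ≠ 0) : ‖((‖x‖⁻¹ : ℝ) : ℂ) • x‖ = 1 := by
  rw [norm_smul]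
  simp only [Complex.norm_real, Real.norm_eq_abs, abs_inv, abs_norm]
  exact inv_mul_cancel₀ (norm_ne_zero_iff.mpr hx)

set_option maxHeartbeats 2000000 in
/-- A nonzero `T` is `ε`-AOP for some `ε ∈ [0,1)` iff `T` is bounded from below. -/
theorem aop_iff_bddBelow (hdim : 2 ≤ Module.rank ℂ H) (T : H →L[ℂ] H) (hT : T ≠ 0) :
    (∃ ε : ℝ, 0 ≤ ε ∧ ε < 1 ∧ IsAOP T ε) ↔ 0 < minMod T := by
  constructor
  · rintro ⟨ε, hε0, hε1, hA⟩
    obtain ⟨y₀, hy₀⟩ : ∃ y, T y ≠ 0 := by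
      by_contra h; push_neg at h
      exact hT (by ext z; simpa using h z)
    have hy₀' : y₀ ≠ 0 := fun h => hy₀ (by rw [h, map_zero])
    set yh : H := ((‖y₀‖⁻¹ : ℝ) : ℂ) • y₀ with hyh
    have hyh1 : ‖yh‖ = 1 := unit_norm' hy₀'
    have hTyh : T yh ≠ 0 := by
      rw [hyh, map_smul, smul_ne_zero_iff]
      exact ⟨by simpa using norm_ne_zero_iff.mpr hy₀', hy₀⟩
    have hm0 : 0 ≤ minMod T :=
      le_csInf ⟨‖T yh‖, yh, hyh1, rfl⟩ (by rintro r ⟨z, hz, rfl⟩; positivity)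
    by_contra hm
    have hm' : minMod T = 0 := le_antisymm (not_lt.mp hm) hm0
    set c : ℝ := ‖T yh‖ with hcdef
    have hc : 0 < c := norm_pos_iff.mpr hTyh
    set N : ℝ := ‖T‖ with hNdef
    have hcN : c ≤ N := by
      have := T.le_opNorm yh
      rwa [hyh1, mul_one] at this
    set K : ℝ := (1+ε)*(c + 2*N) with hKdef
    have hK : 0 < K := by positivity
    set δ : ℝ := min (c/2) ((1-ε)*c^2/(8*K)) with hδdef
    have hδpos : 0 < δ := lt_min (by positivity) (div_pos (mul_pos (by linarith) (pow_pos hc 2)) (by positivity))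
    have hδ1 : δ ≤ c/2 := min_le_left _ _
    have hδ2 : 8*K*δ ≤ (1-ε)*c^2 := by
      have h := min_le_right (c/2) ((1-ε)*c^2/(8*K))
      rw [← hδdef] at h
      rw [mul_comm (8*K) δ]
      exact (le_div_iff₀ (by positivity)).mp h
    -- get unit x with small image
    have hlt : sInf {r : ℝ | ∃ x : H, ‖x‖ = 1 ∧ ‖T x‖ = r} < δ := by
      rw [show sInf {r : ℝ | ∃ x : H, ‖x‖ = 1 ∧ ‖T x‖ = r} = minMod T from rfl, hm']
      exact hδpos
    obtain ⟨r, ⟨x, hx1, rfl⟩, hTx⟩ :=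
      exists_lt_of_csInf_lt (⟨‖T yh‖, yh, hyh1, rfl⟩ :
        Set.Nonempty {r : ℝ | ∃ x : H, ‖x‖ = 1 ∧ ‖T x‖ = r}) hlt
    set t : ℂ := ⟪x, yh⟫ with htdef
    have ht : ‖t‖ ≤ 1 := by
      have := norm_inner_le_norm (𝕜 := ℂ) x yh
      rwa [hx1, hyh1, mul_one] at this
    set v' : H := yh - t • x with hv'def
    have hov : ⟪x, v'⟫ = 0 := by
      simp [hv'def, inner_sub_right, inner_smul_right, @inner_self_eq_norm_sq_to_K ℂ, hx1, htdef]
    have hTv' : c - δ ≤ ‖T v'‖ := by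
      rw [hv'def, map_sub, map_smul T t x]
      have h1 : ‖T yh‖ - ‖t • T x‖ ≤ ‖T yh - t • T x‖ := norm_sub_norm_le _ _
      have h2 : ‖t • T x‖ ≤ δ := by
        rw [norm_smul]
        calc ‖t‖ * ‖T x‖ ≤ 1 * δ := by
              apply mul_le_mul ht hTx.le (norm_nonneg _) zero_le_one
          _ = δ := one_mul δ
      linarith
    have hv'ne : v' ≠ 0 := by
      intro h
      rw [h, map_zero, norm_zero] at hTv'
      linarith
    have hv'le : ‖v'‖ ≤ 1 := by
      have hsq : ‖v'‖^2 = 1 - ‖t‖^2 := by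
        rw [hv'def, @norm_sub_sq ℂ, inner_smul_right]
        have hyx : (⟪yh, x⟫ : ℂ) = (starRingEnd ℂ) t := by
          rw [htdef, ← inner_conj_symm]
        have : (t * ⟪yh, x⟫ : ℂ) = ((‖t‖^2 : ℝ) : ℂ) := by
          rw [hyx, Complex.mul_conj, Complex.normSq_eq_norm_sq]
        rw [this, hyh1, norm_smul t x, hx1]
        simp [RCLike.ofReal_re]
        rw [show (((‖t‖ : ℝ) : ℂ)^2).re = (‖t‖)^2 from by
          rw [← Complex.ofReal_pow, Complex.ofReal_re]]
        ring
      nlinarith [norm_nonneg v', sq_nonneg ‖t‖]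
    set v : H := ((‖v'‖⁻¹ : ℝ) : ℂ) • v' with hvdef
    have hv1 : ‖v‖ = 1 := unit_norm' hv'ne
    have h0 : 0 < ‖v'‖ := norm_pos_iff.mpr hv'ne
    have hTv : c - δ ≤ ‖T v‖ := by
      rw [hvdef, map_smul, norm_smul]
      simp only [Complex.norm_real, Real.norm_eq_abs, abs_inv, abs_norm]
      have hinv : 1 ≤ ‖v'‖⁻¹ := by
        rw [← one_div]; exact (le_div_iff₀ h0).mpr (by linarith)
      calc c - δ ≤ ‖T v'‖ := hTv'
        _ = 1 * ‖T v'‖ := (one_mul _).symm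
        _ ≤ ‖v'‖⁻¹ * ‖T v'‖ := mul_le_mul_of_nonneg_right hinv (norm_nonneg _)
    have hovv : ⟪x, v⟫ = 0 := by
      rw [hvdef, inner_smul_right, hov, mul_zero]
    set α : ℝ := ‖T x‖ with hα
    set β : ℝ := ‖T v‖ with hβ
    have hα0 : 0 ≤ α := norm_nonneg _
    have hβN : β ≤ N := by
      have := T.le_opNorm v
      rwa [hv1, mul_one] at this
    -- orthogonality of x+v and v-x
    have hpq : ⟪x + v, v - x⟫ = 0 := by
      have hvx : ⟪v, x⟫ = 0 := inner_eq_zero_symm.mp hovv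
      simp [inner_add_left, inner_sub_right, hovv, hvx, @inner_self_eq_norm_sq_to_K ℂ, hx1, hv1]
    have hA1 := hA (x + v) (v - x) hpq
    -- lower bound for the inner product
    set I : ℂ := ⟪T (x + v), T (v - x)⟫ with hI
    have e1' : (⟪T v, T v⟫ : ℂ) = I + ⟪T x, T x⟫ + ⟪T v, T x⟫ - ⟪T x, T v⟫ := by
      rw [hI, map_add, map_sub, inner_add_left, inner_sub_right, inner_sub_right]
      ring
    have hself_v : (⟪T v, T v⟫ : ℂ) = ((β^2 : ℝ) : ℂ) := by
      rw [@inner_self_eq_norm_sq_to_K ℂ]; norm_cast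
    have hself_x : (⟪T x, T x⟫ : ℂ) = ((α^2 : ℝ) : ℂ) := by
      rw [@inner_self_eq_norm_sq_to_K ℂ]; norm_cast
    have hixv : ‖(⟪T x, T v⟫ : ℂ)‖ ≤ α * β := norm_inner_le_norm _ _
    have hivx : ‖(⟪T v, T x⟫ : ℂ)‖ ≤ α * β := by
      have := norm_inner_le_norm (𝕜 := ℂ) (T v) (T x)
      linarith [this]
    have key : β^2 ≤ ‖I‖ + α^2 + 2*(α*β) := by
      have : ((β^2 : ℝ) : ℂ) - ((α^2 : ℝ) : ℂ) - ⟪T v, T x⟫ + ⟪T x, T v⟫ = I := by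
        rw [← hself_v, ← hself_x, e1']; ring
      have h2 : ‖((β^2 : ℝ) : ℂ) - ((α^2 : ℝ) : ℂ) - ⟪T v, T x⟫ + ⟪T x, T v⟫‖ = ‖I‖ := by
        rw [this]
      have h3 : ‖((β^2 : ℝ) : ℂ)‖ ≤ ‖((β^2 : ℝ) : ℂ) - ((α^2 : ℝ) : ℂ) - ⟪T v, T x⟫ + ⟪T x, T v⟫‖
          + ‖((α^2 : ℝ) : ℂ)‖ + ‖(⟪T v, T x⟫ : ℂ)‖ + ‖(⟪T x, T v⟫ : ℂ)‖ := by
        have t1 : ((β^2 : ℝ) : ℂ) = (((β^2 : ℝ) : ℂ) - ((α^2 : ℝ) : ℂ) - ⟪T v, T x⟫ + ⟪T x, T v⟫)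
            + ((α^2 : ℝ) : ℂ) + ⟪T v, T x⟫ - ⟪T x, T v⟫ := by ring
        calc ‖((β^2 : ℝ) : ℂ)‖ = ‖(((β^2 : ℝ) : ℂ) - ((α^2 : ℝ) : ℂ) - ⟪T v, T x⟫ + ⟪T x, T v⟫)
            + ((α^2 : ℝ) : ℂ) + ⟪T v, T x⟫ - ⟪T x, T v⟫‖ := by rw [← t1]
          _ ≤ _ := by
            refine le_trans (norm_sub_le _ _) ?_
            gcongr
            refine le_trans (norm_add_le _ _) ?_
            gcongr
            exact norm_add_le _ _
      have h4 : ‖((β^2 : ℝ) : ℂ)‖ = β^2 := by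
        rw [Complex.norm_real, Real.norm_eq_abs, abs_of_nonneg (sq_nonneg _)]
      have h5 : ‖((α^2 : ℝ) : ℂ)‖ = α^2 := by
        rw [Complex.norm_real, Real.norm_eq_abs, abs_of_nonneg (sq_nonneg _)]
      rw [h4] at h3
      rw [h5] at h3
      rw [h2] at h3
      linarith
    -- upper bound via AOP
    have hup : ‖I‖ ≤ ε * (α + β)^2 := by
      have hn1 : ‖T (x + v)‖ ≤ α + β := by rw [map_add]; exact norm_add_le _ _
      have hn2 : ‖T (v - x)‖ ≤ α + β := by
        rw [map_sub]
        refine le_trans (norm_sub_le _ _) (by linarith)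
      calc ‖I‖ ≤ ε * (‖T (x+v)‖ * ‖T (v-x)‖) := hA1
        _ ≤ ε * ((α+β) * (α+β)) := by
            apply mul_le_mul_of_nonneg_left _ hε0
            exact mul_le_mul hn1 hn2 (norm_nonneg _) (by positivity)
        _ = ε * (α+β)^2 := by ring
    -- final contradiction
    have hβc : c - δ ≤ β := hTv
    have hβ2 : c/2 ≤ β := by linarith
    have hαδ : α < δ := hTx
    have hβ0 : 0 ≤ β := by linarith
    have s0 : β^2 ≤ ε*(α+β)^2 + α^2 + 2*(α*β) := by linarith
    have s1 : (1-ε)*β^2 ≤ (1+ε)*α^2 + (2+2*ε)*(α*β) := by nlinarith [s0]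
    have s2 : α^2 ≤ δ*c := by
      rw [sq]; exact mul_le_mul hαδ.le (by linarith) hα0 hδpos.le
    have s3 : α*β ≤ δ*N := mul_le_mul hαδ.le hβN hβ0 hδpos.le
    have s4 : (1-ε)*β^2 ≤ δ*K := by
      rw [hKdef]
      nlinarith [mul_le_mul_of_nonneg_left s2 (by linarith : (0:ℝ) ≤ 1+ε),
        mul_le_mul_of_nonneg_left s3 (by linarith : (0:ℝ) ≤ 2+2*ε)]
    have s5 : (1-ε)*(c/2)^2 ≤ (1-ε)*β^2 :=
      mul_le_mul_of_nonneg_left (by nlinarith [hβ2, hc]) (by linarith)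
    nlinarith [mul_pos (by linarith : (0:ℝ) < 1-ε) (pow_pos hc 2)]
  · intro hm
    set m : ℝ := minMod T with hmdef
    set M : ℝ := ‖T‖ with hMdef
    have hM : 0 < M := norm_pos_iff.mpr (by exact hT)
    set u : ℝ := m^2 with hudef
    set v : ℝ := M^2 with hvdef
    have hu : 0 < u := pow_pos hm 2
    have hv : 0 < v := pow_pos hM 2
    -- bounds on the operator
    have hlow : ∀ z : H, u * ‖z‖^2 ≤ ‖T z‖^2 := by
      intro z
      rcases eq_or_ne z 0 with rfl | hz
      · simp
      · have h1 := minMod_le' T (unit_norm' hz)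
        rw [map_smul, norm_smul] at h1
        simp only [Complex.norm_real, Real.norm_eq_abs, abs_inv, abs_norm] at h1
        have hz0 : 0 < ‖z‖ := norm_pos_iff.mpr hz
        have h2 : m * ‖z‖ ≤ ‖T z‖ := by
          have := mul_le_mul_of_nonneg_right h1 hz0.le
          calc m * ‖z‖ ≤ (‖z‖⁻¹ * ‖T z‖) * ‖z‖ := this
            _ = ‖T z‖ := by field_simp
        calc u * ‖z‖^2 = (m * ‖z‖)^2 := by rw [hudef]; ring
          _ ≤ ‖T z‖^2 := by nlinarith [h2, mul_nonneg hm.le (norm_nonneg z), norm_nonneg (T z)]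
    have hup : ∀ z : H, ‖T z‖^2 ≤ v * ‖z‖^2 := by
      intro z
      have h1 := T.le_opNorm z
      have h2 : 0 ≤ ‖T z‖ := norm_nonneg _
      have h3 : 0 ≤ ‖z‖ := norm_nonneg _
      calc ‖T z‖^2 ≤ (M * ‖z‖)^2 := by nlinarith
        _ = v * ‖z‖^2 := by rw [hvdef]; ring
    have huv : u ≤ v := by
      obtain ⟨y₀, hy₀⟩ : ∃ y, T y ≠ 0 := by
        by_contra h; push_neg at h
        exact hT (by ext z; simpa using h z)
      have hy₀' : y₀ ≠ 0 := fun h => hy₀ (by rw [h, map_zero])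
      have h1 := hlow (((‖y₀‖⁻¹ : ℝ) : ℂ) • y₀)
      have h2 := hup (((‖y₀‖⁻¹ : ℝ) : ℂ) • y₀)
      rw [unit_norm' hy₀'] at h1 h2
      simp only [one_pow, mul_one] at h1 h2
      linarith
    refine ⟨(v - u)/(v + u), div_nonneg (by linarith) (by linarith), ?_, ?_⟩
    · rw [div_lt_one (by linarith)]
      linarith
    · -- first for unit vectors
      have hunit : ∀ x y : H, ‖x‖ = 1 → ‖y‖ = 1 → ⟪x, y⟫ = 0 →
          ‖⟪T x, T y⟫‖ ≤ (v - u)/(v + u) * (‖T x‖ * ‖T y‖) := by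
        intro x y hx hy hxy
        have c1 := cs_lower' T u hlow x y hxy
        have c2 := cs_upper' T v hup x y hxy
        rw [hx, hy] at c1 c2
        simp only [one_pow, mul_one] at c1 c2
        have hA1 : u ≤ ‖T x‖^2 := by have := hlow x; rw [hx] at this; simpa using this
        have hA2 : ‖T x‖^2 ≤ v := by have := hup x; rw [hx] at this; simpa using this
        have hB1 : u ≤ ‖T y‖^2 := by have := hlow y; rw [hy] at this; simpa using this
        have hB2 : ‖T y‖^2 ≤ v := by have := hup y; rw [hy] at this; simpa using this
        have hk : 0 < v + u := by linarith
        rw [div_mul_eq_mul_div, le_div_iff₀ hk]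
        have hgoal : (‖⟪T x, T y⟫‖ * (v + u))^2 ≤ ((v - u) * (‖T x‖ * ‖T y‖))^2 := by
          rcases le_total (‖T x‖^2 + ‖T y‖^2) (u + v) with hS | hS
          · have k1 := key1' u v (‖T x‖^2) (‖T y‖^2) hu.le hA1 hA2 hB1 hB2 hS
            have c1' : (u+v)^2 * ‖⟪T x, T y⟫‖^2 ≤ (u+v)^2 * ((‖T x‖^2 - u)*(‖T y‖^2 - u)) :=
              mul_le_mul_of_nonneg_left c1 (sq_nonneg _)
            calc (‖⟪T x, T y⟫‖ * (v + u))^2 = (u+v)^2 * ‖⟪T x, T y⟫‖^2 := by ring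
              _ ≤ (u+v)^2 * ((‖T x‖^2 - u)*(‖T y‖^2 - u)) := c1'
              _ ≤ (v-u)^2 * (‖T x‖^2 * ‖T y‖^2) := k1
              _ = ((v - u) * (‖T x‖ * ‖T y‖))^2 := by ring
          · have k2 := key2' u v (‖T x‖^2) (‖T y‖^2) hu.le hA1 hA2 hB1 hB2 hS
            have c2' : (u+v)^2 * ‖⟪T x, T y⟫‖^2 ≤ (u+v)^2 * ((v - ‖T x‖^2)*(v - ‖T y‖^2)) :=
              mul_le_mul_of_nonneg_left c2 (sq_nonneg _)
            calc (‖⟪T x, T y⟫‖ * (v + u))^2 = (u+v)^2 * ‖⟪T x, T y⟫‖^2 := by ring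
              _ ≤ (u+v)^2 * ((v - ‖T x‖^2)*(v - ‖T y‖^2)) := c2'
              _ ≤ (v-u)^2 * (‖T x‖^2 * ‖T y‖^2) := k2
              _ = ((v - u) * (‖T x‖ * ‖T y‖))^2 := by ring
        have h1 : 0 ≤ (v - u) * (‖T x‖ * ‖T y‖) := by
          apply mul_nonneg (by linarith)
          positivity
        exact le_of_pow_le_pow_left₀ two_ne_zero h1 hgoal
      -- now in general
      intro x y hxy
      rcases eq_or_ne x 0 with rfl | hx0
      · simp only [map_zero, inner_zero_left, norm_zero, zero_mul, mul_zero, norm_zero]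
        positivity
      rcases eq_or_ne y 0 with rfl | hy0
      · simp only [map_zero, inner_zero_right, norm_zero, mul_zero, norm_zero]
        positivity
      have hxy' : ⟪((‖x‖⁻¹ : ℝ) : ℂ) • x, ((‖y‖⁻¹ : ℝ) : ℂ) • y⟫ = (0 : ℂ) := by
        rw [inner_smul_left, inner_smul_right, hxy]
        ring
      have h := hunit _ _ (unit_norm' hx0) (unit_norm' hy0) hxy'
      rw [map_smul, map_smul, inner_smul_left, inner_smul_right] at h
      rw [norm_mul, norm_mul, norm_smul, norm_smul] at h
      simp only [RCLike.norm_conj, Complex.norm_real, Real.norm_eq_abs, abs_inv, abs_norm] at h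
      have hx0' : 0 < ‖x‖ := norm_pos_iff.mpr hx0
      have hy0' : 0 < ‖y‖ := norm_pos_iff.mpr hy0
      have h2 := mul_le_mul_of_nonneg_left h (by positivity : (0:ℝ) ≤ ‖x‖ * ‖y‖)
      calc ‖⟪T x, T y⟫‖ = (‖x‖ * ‖y‖) * (‖x‖⁻¹ * (‖y‖⁻¹ * ‖⟪T x, T y⟫‖)) := by
            field_simp
        _ ≤ (‖x‖ * ‖y‖) * ((v - u)/(v + u) * (‖x‖⁻¹ * ‖T x‖ * (‖y‖⁻¹ * ‖T y‖))) := h2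
        _ = (v - u)/(v + u) * (‖T x‖ * ‖T y‖) := by field_simp
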